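/- Let n ≥ 1 be a natural number, p ∈ [0,1], and let X be a random variable with the binomial distribution Bin(n,p). Fix δ ∈ (0,1). Define the one-sided Clopper–Pearson lower confidence bound p_L^δ(k) = inf{R ∈ [0,1] : 1 − F_{n,R}(k−1) ≥ δ} for k ≥ 1, and p_L^δ(0) = 0. Then Pr(p ≥ p_L^δ(X)) ≥ 1 − δ. -/

import Mathlib

open scoped Classical BigOperators

/-- The probability mass function of the binomial distribution `Bin(n, p)` at `j`. -/
noncomputable def binomPMF (n : ℕ) (p : ℝ) (j : ℕ) : ℝ :=
  (n.choose j : ℝ) * p ^ j * (1 - p) ^ (n - j)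

/-- The cumulative distribution function of `Bin(n, p)` at `k`:
`F_{n,p}(k) = Σ_{j=0}^{min(k,n)} C(n,j) p^j (1-p)^{n-j}`. -/
noncomputable def binomCDF (n : ℕ) (p : ℝ) (k : ℕ) : ℝ :=
  ∑ j ∈ Finset.range (min k n + 1), binomPMF n p j

/-- One-sided Clopper–Pearson upper confidence bound at count `k` and level `δ`:
`sup {R ∈ [0,1] : F_{n,R}(k) ≥ δ}`. -/
noncomputable def cpUpper (n : ℕ) (δ : ℝ) (k : ℕ) : ℝ :=
  sSup {R : ℝ | R ∈ Set.Icc (0 : ℝ) 1 ∧ δ ≤ binomCDF n R k}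

/-- One-sided Clopper–Pearson lower confidence bound at count `k` and level `δ`:
`inf {R ∈ [0,1] : 1 - F_{n,R}(k-1) ≥ δ}` for `k ≥ 1`, and `0` for `k = 0`. -/
noncomputable def cpLower (n : ℕ) (δ : ℝ) : ℕ → ℝ
  | 0 => 0
  | k + 1 => sInf {R : ℝ | R ∈ Set.Icc (0 : ℝ) 1 ∧ δ ≤ 1 - binomCDF n R k}

lemma binomPMF_nonneg (n : ℕ) {p : ℝ} (hp : p ∈ Set.Icc (0 : ℝ) 1) (j : ℕ) :
    0 ≤ binomPMF n p j := by
  have h0 := hp.1; have h1 := hp.2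
  exact mul_nonneg (mul_nonneg (by positivity) (pow_nonneg h0 _))
    (pow_nonneg (by linarith) _)

lemma binomPMF_sum (n : ℕ) (p : ℝ) :
    ∑ j ∈ Finset.range (n + 1), binomPMF n p j = 1 := by
  have h := add_pow p (1 - p) n
  rw [add_sub_cancel, one_pow] at h
  calc ∑ j ∈ Finset.range (n + 1), binomPMF n p j
      = ∑ j ∈ Finset.range (n + 1), p ^ j * (1 - p) ^ (n - j) * (n.choose j : ℝ) := by
        apply Finset.sum_congr rfl; intro j _; unfold binomPMF; ring
    _ = 1 := h.symm

/-- One-sided Clopper–Pearson lower bound coverage: Pr(p ≥ p_L^δ(X)) ≥ 1 - δ. -/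
theorem clopperPearson_lower_coverage
    (n : ℕ) (hn : 1 ≤ n) (p : ℝ) (hp : p ∈ Set.Icc (0 : ℝ) 1)
    (δ : ℝ) (hδ : δ ∈ Set.Ioo (0 : ℝ) 1) :
    1 - δ ≤ ∑ j ∈ Finset.range (n + 1),
      (if cpLower n δ j ≤ p then binomPMF n p j else 0) := by
  by_cases hall : ∀ j ∈ Finset.range (n + 1), cpLower n δ j ≤ p
  · have : ∑ j ∈ Finset.range (n + 1),
        (if cpLower n δ j ≤ p then binomPMF n p j else 0)
        = ∑ j ∈ Finset.range (n + 1), binomPMF n p j := by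
      apply Finset.sum_congr rfl
      intro j hj
      rw [if_pos (hall j hj)]
    rw [this, binomPMF_sum]
    linarith [hδ.1]
  · push_neg at hall
    obtain ⟨j₀, hj₀mem, hj₀⟩ := hall
    have hex : ∃ j, p < cpLower n δ j := ⟨j₀, hj₀⟩
    set m := Nat.find hex with hm
    have hmspec : p < cpLower n δ m := Nat.find_spec hex
    have hmle : m ≤ j₀ := Nat.find_le hj₀
    have hj₀n : j₀ ≤ n := Nat.lt_succ_iff.mp (Finset.mem_range.mp hj₀mem)
    have hm1 : 1 ≤ m := by
      rcases Nat.eq_zero_or_pos m with h0 | h1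
      · exfalso
        rw [h0] at hmspec
        simp only [cpLower] at hmspec
        exact absurd hp.1 (not_le.mpr hmspec)
      · exact h1
    obtain ⟨k, hk⟩ : ∃ k, m = k + 1 := ⟨m - 1, (Nat.succ_pred_eq_of_pos hm1).symm⟩
    have hkn : k < n := by omega
    -- key: δ > 1 - binomCDF n p k
    have hkey : 1 - binomCDF n p k < δ := by
      by_contra hcon
      push_neg at hcon
      have hpS : p ∈ {R : ℝ | R ∈ Set.Icc (0 : ℝ) 1 ∧ δ ≤ 1 - binomCDF n R k} :=
        ⟨hp, hcon⟩
      have hbdd : BddBelow {R : ℝ | R ∈ Set.Icc (0 : ℝ) 1 ∧ δ ≤ 1 - binomCDF n R k} :=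
        ⟨0, fun x hx => hx.1.1⟩
      have : cpLower n δ m ≤ p := by
        rw [hk]; exact csInf_le hbdd hpS
      exact absurd this (not_le.mpr hmspec)
    have hCDF : binomCDF n p k = ∑ j ∈ Finset.range (k + 1), binomPMF n p j := by
      unfold binomCDF
      rw [min_eq_left hkn.le]
    have hsub : Finset.range (k + 1) ⊆ Finset.range (n + 1) :=
      Finset.range_subset_range.mpr (by omega)
    have hstep : ∑ j ∈ Finset.range (k + 1), binomPMF n p j
        ≤ ∑ j ∈ Finset.range (n + 1),
          (if cpLower n δ j ≤ p then binomPMF n p j else 0) := by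
      have heq : ∑ j ∈ Finset.range (k + 1), binomPMF n p j
          = ∑ j ∈ Finset.range (k + 1),
            (if cpLower n δ j ≤ p then binomPMF n p j else 0) := by
        apply Finset.sum_congr rfl
        intro j hj
        have hjk : j < m := by
          have := Finset.mem_range.mp hj; omega
        have := Nat.find_min hex hjk
        rw [if_pos (not_lt.mp this)]
      rw [heq]
      apply Finset.sum_le_sum_of_subset_of_nonneg hsub
      intro j _ _
      split
      · exact binomPMF_nonneg n hp j
      · exact le_refl 0
    linarith
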